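/- Let S be a positive semidomain, i.e., a subsemiring of the real numbers all of whose elements are nonnegative. If a is an atom of the additive monoid (S, +) and b ∈ S divides a multiplicatively (a = b·c for some c ∈ S), then b is an atom of the additive monoid (S, +). In other words, the set of additive atoms of S is closed under multiplicative divisors. -/
import Mathlib

/-- In a positive semidomain (a subsemiring of `ℝ` all of whose elements are
nonnegative), any multiplicative divisor of an additive atom is again an additive
atom: the set of additive atoms is multiplicatively divisor-closed. -/
theorem additive_atoms_divisor_closed (S : Subsemiring ℝ) (hS : ∀ x ∈ S, (0 : ℝ) ≤ x)
    (a b c : ℝ) (ha : a ∈ S) (hb : b ∈ S) (hc : c ∈ S)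
    (hatom : a ≠ 0 ∧ ∀ x ∈ S, ∀ y ∈ S, a = x + y → x = 0 ∨ y = 0)
    (hdiv : a = b * c) :
    b ≠ 0 ∧ ∀ x ∈ S, ∀ y ∈ S, b = x + y → x = 0 ∨ y = 0 := by
  obtain ⟨ha0, hA⟩ := hatom
  have hb0 : b ≠ 0 := by rintro rfl; exact ha0 (by simpa using hdiv)
  have hc0 : c ≠ 0 := by rintro rfl; exact ha0 (by simpa using hdiv)
  refine ⟨hb0, fun x hx y hy hxy => ?_⟩
  have : a = x * c + y * c := by rw [hdiv, hxy, add_mul]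
  rcases hA _ (S.mul_mem hx hc) _ (S.mul_mem hy hc) this with h | h
  · exact Or.inl ((mul_eq_zero.1 h).resolve_right hc0)
  · exact Or.inr ((mul_eq_zero.1 h).resolve_right hc0)
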